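/- Let P₁, P₂ be pastures with distinguished elements ε₁, ε₂, let f : P₁ → P₂ be a pasture morphism, and let h : P₁× → P₂× be a group homomorphism such that h(ε₁) = 1 and h(x) = 1 for every fundamental element x ∈ FE(P₁). Then the map g : P₁ → P₂ defined by g(0) = 0 and g(x) = f(x)·h(x) for x ∈ P₁× is again a pasture morphism. (Hence the set of pasture morphisms P₁ → P₂ is a union of cosets of the group of characters of P₁× trivial on the subgroup generated by FE(P₁) and ε₁.) -/
import Mathlib


/-- A *pasture*: a commutative monoid with absorbing zero whose nonzero elements form an
abelian group (i.e. a `CommGroupWithZero`), together with a nullset `null ⊆ P³` satisfying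
(P1) `(1,0,0) ∉ null`, (P2) there is a unique `e` with `(1,e,0) ∈ null`, and (P3) `null` is
closed under the action of `S₃ × P` (encoded via the two generating transpositions together
with simultaneous scaling). -/
structure Pasture where
  carrier : Type*
  [str : CommGroupWithZero carrier]
  null : Set (carrier × carrier × carrier)
  one_zero_zero_not_mem : ((1 : carrier), (0 : carrier), (0 : carrier)) ∉ null
  epsilon_existsUnique : ∃! e : carrier, ((1 : carrier), e, (0 : carrier)) ∈ null
  swap_left_mem : ∀ {a b c : carrier}, (a, b, c) ∈ null → (b, a, c) ∈ null
  swap_right_mem : ∀ {a b c : carrier}, (a, b, c) ∈ null → (a, c, b) ∈ null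
  scale_mem : ∀ {a b c : carrier} (p : carrier), (a, b, c) ∈ null → (a * p, b * p, c * p) ∈ null

attribute [instance] Pasture.str


/-- The distinguished element `ε` of a pasture. -/
noncomputable def Pasture.eps (P : Pasture) : P.carrier := P.epsilon_existsUnique.choose

/-- The set of fundamental pairs of a pasture: pairs `(x, y)` of nonzero elements with
`(x, y, ε) ∈ N_P`. -/
def Pasture.FP (P : Pasture) : Set (P.carrier × P.carrier) :=
  {p | p.1 ≠ 0 ∧ p.2 ≠ 0 ∧ (p.1, p.2, P.eps) ∈ P.null}

/-- The set of fundamental elements of a pasture. -/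
def Pasture.FE (P : Pasture) : Set P.carrier := {x | ∃ y, (x, y) ∈ P.FP}

/-- A pasture morphism: a map of sets with `f 0 = 0`, whose restriction to the unit groups
is a group homomorphism, and which maps the nullset into the nullset. -/
def IsPastureMorphism (P₁ P₂ : Pasture) (f : P₁.carrier → P₂.carrier) : Prop :=
  f 0 = 0 ∧ (∀ x : P₁.carrier, x ≠ 0 → f x ≠ 0) ∧
    (∀ x y : P₁.carrier, x ≠ 0 → y ≠ 0 → f (x * y) = f x * f y) ∧
    ∀ a b c : P₁.carrier, (a, b, c) ∈ P₁.null → (f a, f b, f c) ∈ P₂.null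


universe u

namespace Pasture

lemma eps_mem (P : Pasture.{u}) : ((1 : P.carrier), P.eps, (0 : P.carrier)) ∈ P.null :=
  P.epsilon_existsUnique.choose_spec.1

lemma eps_unique (P : Pasture.{u}) {e : P.carrier}
    (he : ((1 : P.carrier), e, (0 : P.carrier)) ∈ P.null) : e = P.eps :=
  P.epsilon_existsUnique.choose_spec.2 e he

lemma eps_ne_zero (P : Pasture.{u}) : P.eps ≠ 0 := by
  intro h0
  exact P.one_zero_zero_not_mem (h0 ▸ P.eps_mem)

lemma zero_zero_zero_mem (P : Pasture.{u}) : ((0 : P.carrier), 0, 0) ∈ P.null := by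
  have := P.scale_mem 0 P.eps_mem
  simpa using this

lemma not_mem_single (P : Pasture.{u}) {a : P.carrier} (ha : a ≠ 0) :
    (a, (0 : P.carrier), (0 : P.carrier)) ∉ P.null := by
  intro hn
  have := P.scale_mem a⁻¹ hn
  rw [mul_inv_cancel₀ ha, zero_mul] at this
  exact P.one_zero_zero_not_mem this

lemma null_two (P : Pasture.{u}) {a b : P.carrier} (ha : a ≠ 0)
    (hn : (a, b, (0 : P.carrier)) ∈ P.null) : b = a * P.eps := by
  have h1 := P.scale_mem a⁻¹ hn
  rw [mul_inv_cancel₀ ha, zero_mul] at h1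
  have h2 := P.eps_unique h1
  have h3 : b = P.eps * a := by
    have := congrArg (· * a) h2
    simpa [mul_assoc, inv_mul_cancel₀ ha] using this
  rw [h3, mul_comm]

lemma fp_of_null (P : Pasture.{u}) {a b c : P.carrier} (ha : a ≠ 0) (hb : b ≠ 0) (hc : c ≠ 0)
    (hn : (a, b, c) ∈ P.null) : (a * (c⁻¹ * P.eps), b * (c⁻¹ * P.eps)) ∈ P.FP := by
  refine ⟨mul_ne_zero ha (mul_ne_zero (inv_ne_zero hc) P.eps_ne_zero),
    mul_ne_zero hb (mul_ne_zero (inv_ne_zero hc) P.eps_ne_zero), ?_⟩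
  have hs := P.scale_mem (c⁻¹ * P.eps) hn
  have hce : c * (c⁻¹ * P.eps) = P.eps := by
    rw [← mul_assoc, mul_inv_cancel₀ hc, one_mul]
  rwa [hce] at hs

end Pasture

/-- Twisting a pasture morphism `f : P₁ → P₂` by a character `h` of `P₁^×` which is trivial
on `ε₁` and on all fundamental elements of `P₁` yields again a pasture morphism: the map `g`
with `g 0 = 0` and `g x = f x · h x` for `x ∈ P₁^×` is a pasture morphism. -/
theorem twist_by_character_isPastureMorphism (P₁ P₂ : Pasture)
    (f : P₁.carrier → P₂.carrier) (hf : IsPastureMorphism P₁ P₂ f)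
    (h : P₁.carrier → P₂.carrier)
    (hunits : ∀ x : P₁.carrier, x ≠ 0 → h x ≠ 0)
    (hmul : ∀ x y : P₁.carrier, x ≠ 0 → y ≠ 0 → h (x * y) = h x * h y)
    (heps : h P₁.eps = 1)
    (hFE : ∀ x ∈ P₁.FE, h x = 1)
    (g : P₁.carrier → P₂.carrier) (hg0 : g 0 = 0)
    (hg : ∀ x : P₁.carrier, x ≠ 0 → g x = f x * h x) :
    IsPastureMorphism P₁ P₂ g := by
  obtain ⟨hf0, hfne, hfmul, hfnull⟩ := hf
  have h1 : h 1 = 1 := by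
    have e := hmul 1 1 one_ne_zero one_ne_zero
    rw [mul_one] at e
    have e2 : h 1 * 1 = h 1 * h 1 := by rw [mul_one, ← e]
    exact (mul_left_cancel₀ (hunits 1 one_ne_zero) e2).symm
  have hinv : ∀ x : P₁.carrier, x ≠ 0 → h x⁻¹ = (h x)⁻¹ := by
    intro x hx
    have e := hmul x x⁻¹ hx (inv_ne_zero hx)
    rw [mul_inv_cancel₀ hx, h1] at e
    exact eq_inv_of_mul_eq_one_right e.symm
  have key : ∀ a b c : P₁.carrier, a ≠ 0 → b ≠ 0 → c ≠ 0 →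
      (a, b, c) ∈ P₁.null → h a = h c := by
    intro a b c ha hb hc hn
    have hfe := hFE _ ⟨_, P₁.fp_of_null ha hb hc hn⟩
    rw [hmul _ _ ha (mul_ne_zero (inv_ne_zero hc) P₁.eps_ne_zero),
        hmul _ _ (inv_ne_zero hc) P₁.eps_ne_zero, heps, mul_one, hinv c hc] at hfe
    have := congrArg (· * h c) hfe
    simpa [mul_assoc, inv_mul_cancel₀ (hunits c hc)] using this
  refine ⟨hg0, ?_, ?_, ?_⟩
  · intro x hx
    rw [hg x hx]
    exact mul_ne_zero (hfne x hx) (hunits x hx)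
  · intro x y hx hy
    rw [hg _ (mul_ne_zero hx hy), hg x hx, hg y hy, hfmul x y hx hy, hmul x y hx hy]
    exact mul_mul_mul_comm _ _ _ _
  · intro a b c hn
    by_cases ha : a = 0 <;> by_cases hb : b = 0 <;> by_cases hc : c = 0
    · subst ha; subst hb; subst hc
      simpa [hg0] using P₂.zero_zero_zero_mem
    · -- a = 0, b = 0, c ≠ 0
      subst ha; subst hb
      exact absurd (P₁.swap_left_mem (P₁.swap_right_mem hn)) (P₁.not_mem_single hc)
    · -- a = 0, b ≠ 0, c = 0
      subst ha; subst hc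
      exact absurd (P₁.swap_left_mem hn) (P₁.not_mem_single hb)
    · -- a = 0, b ≠ 0, c ≠ 0
      subst ha
      have hn' : (b, c, (0 : P₁.carrier)) ∈ P₁.null :=
        P₁.swap_right_mem (P₁.swap_left_mem hn)
      have hcb : h c = h b := by
        rw [P₁.null_two hb hn', hmul b P₁.eps hb P₁.eps_ne_zero, heps, mul_one]
      have hf2 : ((0 : P₂.carrier), f b, f c) ∈ P₂.null := by
        have := hfnull 0 b c hn; rwa [hf0] at this
      have := P₂.scale_mem (h b) hf2
      rw [zero_mul] at this
      rw [hg0, hg b hb, hg c hc, hcb]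
      exact this
    · -- a ≠ 0, b = 0, c = 0
      subst hb; subst hc
      exact absurd hn (P₁.not_mem_single ha)
    · -- a ≠ 0, b = 0, c ≠ 0
      subst hb
      have hn' : (a, c, (0 : P₁.carrier)) ∈ P₁.null := P₁.swap_right_mem hn
      have hca : h c = h a := by
        rw [P₁.null_two ha hn', hmul a P₁.eps ha P₁.eps_ne_zero, heps, mul_one]
      have hf2 : (f a, (0 : P₂.carrier), f c) ∈ P₂.null := by
        have := hfnull a 0 c hn; rwa [hf0] at this
      have := P₂.scale_mem (h a) hf2
      rw [zero_mul] at this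
      rw [hg a ha, hg0, hg c hc, hca]
      exact this
    · -- a ≠ 0, b ≠ 0, c = 0
      subst hc
      have hba : h b = h a := by
        rw [P₁.null_two ha hn, hmul a P₁.eps ha P₁.eps_ne_zero, heps, mul_one]
      have hf2 : (f a, f b, (0 : P₂.carrier)) ∈ P₂.null := by
        have := hfnull a b 0 hn; rwa [hf0] at this
      have := P₂.scale_mem (h a) hf2
      rw [zero_mul] at this
      rw [hg a ha, hg b hb, hg0, hba]
      exact this
    · -- all nonzero
      have hac := key a b c ha hb hc hn
      have hbc := key b a c hb ha hc (P₁.swap_left_mem hn)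
      rw [hg a ha, hg b hb, hg c hc, hac, hbc]
      exact P₂.scale_mem (h c) (hfnull a b c hn)
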